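/- On a d-dimensional Hilbert space, for any collection of incompatible observables D₁,…,D_n: 2 ≤ χ_incomp(D₁,…,D_n) ≤ d² and d ≤ χ_comp(D₁,…,D_n) ≤ d² − 1, and moreover χ_incomp(D₁,…,D_n) ≤ χ_comp(D₁,…,D_n) + 1. -/

import Mathlib

open Matrix ComplexOrder

noncomputable section

def IsPOVM {ι : Type*} [Fintype ι] {n : Type*} [Fintype n] [DecidableEq n]
    (G : ι → Matrix n n ℂ) : Prop :=
  (∀ i, (G i).PosSemidef) ∧ ∑ i, G i = 1

def IsState {n : Type*} [Fintype n] [DecidableEq n] (ρ : Matrix n n ℂ) : Prop :=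
  ρ.PosSemidef ∧ ρ.trace = 1

/-- `S₀`-compatibility of an `n`-tuple of observables. -/
def SCompat {d n : ℕ} {m : Fin n → ℕ}
    (A : (j : Fin n) → Fin (m j) → Matrix (Fin d) (Fin d) ℂ)
    (S₀ : Set (Matrix (Fin d) (Fin d) ℂ)) : Prop :=
  ∃ G : ((j : Fin n) → Fin (m j)) → Matrix (Fin d) (Fin d) ℂ, IsPOVM G ∧
    ∀ ρ ∈ S₀, ∀ (j : Fin n) (x : Fin (m j)),
      ∑ g ∈ Finset.univ.filter (fun g : (j : Fin n) → Fin (m j) => g j = x),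
        (ρ * G g).trace = (ρ * A j x).trace

/-- Incompatibility dimension. -/
def chiIncomp {d n : ℕ} {m : Fin n → ℕ}
    (A : (j : Fin n) → Fin (m j) → Matrix (Fin d) (Fin d) ℂ) : ℕ :=
  sInf {k : ℕ | ∃ S₀ : Set (Matrix (Fin d) (Fin d) ℂ),
    (∀ ρ ∈ S₀, IsState ρ) ∧ ¬ SCompat A S₀ ∧
    k = Module.finrank ℝ (vectorSpan ℝ S₀) + 1}

/-- Compatibility dimension. -/
def chiComp {d n : ℕ} {m : Fin n → ℕ}
    (A : (j : Fin n) → Fin (m j) → Matrix (Fin d) (Fin d) ℂ) : ℕ :=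
  sSup {k : ℕ | ∃ S₀ : Set (Matrix (Fin d) (Fin d) ℂ),
    (∀ ρ ∈ S₀, IsState ρ) ∧ SCompat A S₀ ∧
    k = Module.finrank ℝ (vectorSpan ℝ S₀) + 1}

/-! ### Auxiliary lemmas -/

lemma diag_nonneg' {d : ℕ} {M : Matrix (Fin d) (Fin d) ℂ} (h : M.PosSemidef) (i : Fin d) :
    0 ≤ M i i := by
  have := h.dotProduct_mulVec_nonneg (Pi.single i 1)
  simpa [dotProduct, Pi.single_apply] using this

lemma trace_nonneg' {d : ℕ} {M : Matrix (Fin d) (Fin d) ℂ} (h : M.PosSemidef) : 0 ≤ M.trace := by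
  apply Finset.sum_nonneg; intro i _; exact diag_nonneg' h i

lemma trace_mul_nonneg' {d : ℕ} {A B : Matrix (Fin d) (Fin d) ℂ} (hA : A.PosSemidef)
    (hB : B.PosSemidef) : 0 ≤ (A * B).trace := by
  obtain ⟨C, rfl⟩ : ∃ C : Matrix (Fin d) (Fin d) ℂ, A = Cᴴ * C := by
    open scoped MatrixOrder in exact CStarAlgebra.nonneg_iff_eq_star_mul_self.mp hA.nonneg
  rw [Matrix.mul_assoc, Matrix.trace_mul_comm]
  exact trace_nonneg' (by simpa [Matrix.mul_assoc] using hB.mul_mul_conjTranspose_same C)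

lemma psd_smul {d : ℕ} {A : Matrix (Fin d) (Fin d) ℂ} (hA : A.PosSemidef) {c : ℂ} (hc : 0 ≤ c) :
    (c • A).PosSemidef := by
  constructor
  · have hcs : star c = c := by
      rw [Complex.star_def, Complex.conj_eq_iff_im]
      exact (Complex.nonneg_iff.mp hc).2.symm
    rw [Matrix.IsHermitian, Matrix.conjTranspose_smul, hcs, hA.1.eq]
  · intro x
    exact (hA.smul hc).2 x

lemma psd_sum {d : ℕ} {ι : Type*} (s : Finset ι) (f : ι → Matrix (Fin d) (Fin d) ℂ)
    (hf : ∀ i ∈ s, (f i).PosSemidef) : (∑ i ∈ s, f i).PosSemidef := by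
  classical
  induction s using Finset.induction with
  | empty => simpa using Matrix.PosSemidef.zero
  | insert _ _ h ih =>
    rw [Finset.sum_insert h]
    exact ((hf _ (Finset.mem_insert_self _ _)).add
      (ih fun i hi => hf i (Finset.mem_insert_of_mem hi)))

lemma prodSum {n : ℕ} {m : Fin n → ℕ} (p : (j : Fin n) → Fin (m j) → ℂ)
    (hp : ∀ j, ∑ x, p j x = 1) :
    ∑ g : (j : Fin n) → Fin (m j), ∏ j, p j (g j) = 1 := by
  classical
  rw [← Fintype.piFinset_univ, ← Finset.prod_univ_sum]
  simp [hp]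

lemma prodMarginal {n : ℕ} {m : Fin n → ℕ} (p : (j : Fin n) → Fin (m j) → ℂ)
    (hp : ∀ j, ∑ x, p j x = 1) (j : Fin n) (x : Fin (m j)) :
    ∑ g ∈ Finset.univ.filter (fun g : (k : Fin n) → Fin (m k) => g j = x),
      ∏ k, p k (g k) = p j x := by
  classical
  set t : (k : Fin n) → Finset (Fin (m k)) :=
    fun k => if h : k = j then {Fin.cast (congrArg m h).symm x} else Finset.univ with ht
  have hfil : Finset.univ.filter (fun g : (k : Fin n) → Fin (m k) => g j = x)
      = Fintype.piFinset t := by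
    ext g
    simp only [Finset.mem_filter, Finset.mem_univ, true_and, Fintype.mem_piFinset]
    constructor
    · intro hg k
      by_cases h : k = j
      · subst h; simp [ht, hg]
      · simp [ht, h]
    · intro hg
      have := hg j
      simpa [ht] using this
  rw [hfil, ← Finset.prod_univ_sum]
  rw [Finset.prod_eq_single j]
  · simp [ht]
  · intro k _ hk
    simp [ht, hk, hp k]
  · simp

lemma compat_general {d n : ℕ} {m : Fin n → ℕ}
    (D : (j : Fin n) → Fin (m j) → Matrix (Fin d) (Fin d) ℂ)
    (hD : ∀ j, IsPOVM (D j))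
    {ι : Type*} [Fintype ι] [DecidableEq ι] (F σ : ι → Matrix (Fin d) (Fin d) ℂ)
    (hF : ∀ i, (F i).PosSemidef) (hFsum : ∑ i, F i = 1)
    (hσ : ∀ i, IsState (σ i))
    (hδ : ∀ a b, ((σ a) * (F b)).trace = if a = b then 1 else 0)
    {S₀ : Set (Matrix (Fin d) (Fin d) ℂ)} (hS : S₀ ⊆ Set.range σ) : SCompat D S₀ := by
  classical
  set p : ι → (j : Fin n) → Fin (m j) → ℂ := fun i j x => ((σ i) * D j x).trace with hp
  have hp1 : ∀ i j, ∑ x, p i j x = 1 := by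
    intro i j
    rw [hp]
    simp only [← Matrix.trace_sum, ← Finset.mul_sum, (hD j).2, Matrix.mul_one]
    exact (hσ i).2
  refine ⟨fun g => ∑ i, (∏ j, p i j (g j)) • F i, ⟨?_, ?_⟩, ?_⟩
  · intro g
    refine psd_sum _ _ fun i _ => psd_smul (hF i) ?_
    exact Finset.prod_nonneg fun j _ => trace_mul_nonneg' (hσ i).1 ((hD j).1 (g j))
  · rw [Finset.sum_comm]
    have : ∀ i, ∑ g : (j : Fin n) → Fin (m j), (∏ j, p i j (g j)) • F i = F i := by
      intro i
      rw [← Finset.sum_smul, prodSum _ (hp1 i), one_smul]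
    simp_rw [this, hFsum]
  · rintro ρ hρ j x
    obtain ⟨a, rfl⟩ := hS hρ
    have key : ∀ g : (j : Fin n) → Fin (m j),
        ((σ a) * ∑ i, (∏ j, p i j (g j)) • F i).trace = ∏ j, p a j (g j) := by
      intro g
      rw [Finset.mul_sum, Matrix.trace_sum]
      simp_rw [Matrix.mul_smul, Matrix.trace_smul, hδ]
      simp
    simp_rw [key]
    exact prodMarginal _ (hp1 a) j x

lemma scompat_of_subsingleton {d n : ℕ} {m : Fin n → ℕ} (hd : 0 < d)
    (D : (j : Fin n) → Fin (m j) → Matrix (Fin d) (Fin d) ℂ)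
    (hD : ∀ j, IsPOVM (D j))
    {S₀ : Set (Matrix (Fin d) (Fin d) ℂ)} (hS : ∀ ρ ∈ S₀, IsState ρ)
    (hsub : S₀.Subsingleton) : SCompat D S₀ := by
  have hdC : ((d : ℂ)) ≠ 0 := Nat.cast_ne_zero.mpr hd.ne'
  rcases S₀.eq_empty_or_nonempty with hE | ⟨ρ₀, hρ₀⟩
  · have hinv : (0 : ℂ) ≤ (d : ℂ)⁻¹ := by
      rw [show ((d : ℂ))⁻¹ = Complex.ofReal ((d : ℝ)⁻¹) by push_cast; ring]
      exact Complex.zero_le_real.mpr (inv_nonneg.mpr (Nat.cast_nonneg d))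
    have htr : ((d : ℂ)⁻¹ • (1 : Matrix (Fin d) (Fin d) ℂ)).trace = 1 := by
      rw [Matrix.trace_smul, Matrix.trace_one]
      simp [smul_eq_mul, inv_mul_cancel₀ hdC]
    refine compat_general D hD (fun _ : Fin 1 => 1) (fun _ => (d : ℂ)⁻¹ • 1)
      (fun _ => Matrix.PosSemidef.one) (by simp) ?_ ?_ ?_
    · exact fun _ => ⟨psd_smul Matrix.PosSemidef.one hinv, htr⟩
    · intro a b
      have hab : a = b := Subsingleton.elim a b
      subst hab
      rw [if_pos rfl, Matrix.mul_one, htr]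
    · rw [hE]; exact Set.empty_subset _
  · refine compat_general D hD (fun _ : Fin 1 => 1) (fun _ => ρ₀)
      (fun _ => Matrix.PosSemidef.one) (by simp) (fun _ => hS ρ₀ hρ₀) ?_ ?_
    · intro a b
      have hab : a = b := Subsingleton.elim a b
      subst hab
      rw [if_pos rfl, Matrix.mul_one, (hS ρ₀ hρ₀).2]
    · intro a ha
      exact ⟨0, (hsub hρ₀ ha)⟩

/-! ### The hermitian traceless subspace -/

def ctLin (d : ℕ) : Matrix (Fin d) (Fin d) ℂ →ₗ[ℝ] Matrix (Fin d) (Fin d) ℂ where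
  toFun X := X - Xᴴ
  map_add' X Y := by simp [Matrix.conjTranspose_add]; abel
  map_smul' r X := by simp [Matrix.conjTranspose_smul, smul_sub]

@[simp] lemma ctLin_apply (d : ℕ) (X : Matrix (Fin d) (Fin d) ℂ) : ctLin d X = X - Xᴴ := rfl

def trReLin (d : ℕ) : Matrix (Fin d) (Fin d) ℂ →ₗ[ℝ] ℝ :=
  Complex.reLm.comp (Matrix.traceLinearMap (Fin d) ℝ ℂ)

@[simp] lemma trReLin_apply (d : ℕ) (X : Matrix (Fin d) (Fin d) ℂ) :
    trReLin d X = (X.trace).re := rfl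

def mulILin (d : ℕ) : Matrix (Fin d) (Fin d) ℂ ≃ₗ[ℝ] Matrix (Fin d) (Fin d) ℂ where
  toFun X := Complex.I • X
  invFun X := (-Complex.I) • X
  map_add' X Y := smul_add _ _ _
  map_smul' r X := smul_comm _ _ _
  left_inv X := by simp [smul_smul]
  right_inv X := by simp [smul_smul]

def hermT (d : ℕ) : Submodule ℝ (Matrix (Fin d) (Fin d) ℂ) :=
  LinearMap.ker (ctLin d) ⊓ LinearMap.ker (trReLin d)

lemma finrank_ambient (d : ℕ) :
    Module.finrank ℝ (Matrix (Fin d) (Fin d) ℂ) = d * d * 2 := by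
  rw [Module.finrank_matrix]; simp [Complex.finrank_real_complex]

lemma finrank_ker_ctLin (d : ℕ) : Module.finrank ℝ (LinearMap.ker (ctLin d)) ≤ d * d := by
  have hmap : (LinearMap.ker (ctLin d)).map ((mulILin d : _ ≃ₗ[ℝ] _) : Matrix (Fin d) (Fin d) ℂ →ₗ[ℝ] Matrix (Fin d) (Fin d) ℂ)
      ≤ LinearMap.range (ctLin d) := by
    rintro Y hY
    obtain ⟨X, hX, rfl⟩ := hY
    rw [SetLike.mem_coe, LinearMap.mem_ker, ctLin_apply, sub_eq_zero] at hX
    refine ⟨((Complex.I / 2) • X), ?_⟩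
    rw [ctLin_apply, Matrix.conjTranspose_smul, ← hX]
    show _ = mulILin d X
    show _ = Complex.I • X
    rw [sub_eq_add_neg, ← neg_smul, ← add_smul]
    congr 1
    simp [Complex.ext_iff]
    norm_num
  have h1 : Module.finrank ℝ ((LinearMap.ker (ctLin d)).map ((mulILin d : _ ≃ₗ[ℝ] _) : Matrix (Fin d) (Fin d) ℂ →ₗ[ℝ] Matrix (Fin d) (Fin d) ℂ))
      = Module.finrank ℝ (LinearMap.ker (ctLin d)) :=
    LinearEquiv.finrank_map_eq _ _
  have h2 := LinearMap.finrank_range_add_finrank_ker (ctLin d)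
  have h3 : Module.finrank ℝ (LinearMap.ker (ctLin d))
      ≤ Module.finrank ℝ (LinearMap.range (ctLin d)) := by
    rw [← h1]; exact Submodule.finrank_mono hmap
  have h4 := finrank_ambient d
  omega

lemma finrank_hermT (d : ℕ) (hd : 0 < d) : Module.finrank ℝ (hermT d) ≤ d * d - 1 := by
  classical
  set K := LinearMap.ker (ctLin d) with hK
  set t := (trReLin d).domRestrict K with htdef
  have hker : LinearMap.ker t = Submodule.comap K.subtype (LinearMap.ker (trReLin d)) :=
    LinearMap.ker_domRestrict _ _
  have hW : hermT d = Submodule.map K.subtype (LinearMap.ker t) := by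
    rw [hker, Submodule.map_comap_subtype]; rfl
  have hfr : Module.finrank ℝ (hermT d) = Module.finrank ℝ (LinearMap.ker t) := by
    rw [hW]; exact Submodule.finrank_map_subtype_eq _ _
  have h2 := LinearMap.finrank_range_add_finrank_ker t
  have hone : (1 : Matrix (Fin d) (Fin d) ℂ) ∈ K := by
    simp [hK, LinearMap.mem_ker]
  have hrange : LinearMap.range t ≠ ⊥ := by
    intro hbot
    have ht0 : t = 0 := LinearMap.range_eq_bot.mp hbot
    have hval : t ⟨1, hone⟩ = (d : ℝ) := by
      simp [htdef, Matrix.trace_one]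
    rw [ht0] at hval
    simp at hval
    exact absurd hval.symm (by positivity)
  have hr1 : 1 ≤ Module.finrank ℝ (LinearMap.range t) := by
    rw [Nat.one_le_iff_ne_zero]
    intro h0
    exact hrange (Submodule.finrank_eq_zero.mp h0)
  have hKle := finrank_ker_ctLin d
  rw [← hK] at hKle
  rw [hfr]
  omega

lemma vectorSpan_states_le {d : ℕ} {S₀ : Set (Matrix (Fin d) (Fin d) ℂ)}
    (hS : ∀ ρ ∈ S₀, IsState ρ) : vectorSpan ℝ S₀ ≤ hermT d := by
  rw [vectorSpan_def, Submodule.span_le]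
  rintro v hv
  rw [Set.mem_vsub] at hv
  obtain ⟨a, ha, b, hb, rfl⟩ := hv
  rw [vsub_eq_sub]
  refine Submodule.mem_inf.mpr ⟨?_, ?_⟩
  · rw [LinearMap.mem_ker, ctLin_apply, Matrix.conjTranspose_sub,
      ((hS a ha).1.1 : aᴴ = a), ((hS b hb).1.1 : bᴴ = b), sub_self]
  · rw [LinearMap.mem_ker, trReLin_apply, Matrix.trace_sub, (hS a ha).2, (hS b hb).2]
    simp

def traceMulLin {d : ℕ} (M₀ : Matrix (Fin d) (Fin d) ℂ) :
    Matrix (Fin d) (Fin d) ℂ →ₗ[ℝ] ℂ where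
  toFun ρ := (ρ * M₀).trace
  map_add' ρ σ := by simp [add_mul]
  map_smul' r ρ := by simp [smul_mul_assoc]

lemma scompat_affine {d n : ℕ} {m : Fin n → ℕ}
    (D : (j : Fin n) → Fin (m j) → Matrix (Fin d) (Fin d) ℂ)
    {S₀ S₁ : Set (Matrix (Fin d) (Fin d) ℂ)} (h : SCompat D S₀)
    (hsub : S₁ ⊆ (affineSpan ℝ S₀ : Set (Matrix (Fin d) (Fin d) ℂ))) : SCompat D S₁ := by
  classical
  obtain ⟨G, hG, hmarg⟩ := h
  refine ⟨G, hG, ?_⟩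
  intro ρ hρ j x
  set L : Matrix (Fin d) (Fin d) ℂ →ₗ[ℝ] ℂ :=
    (∑ g ∈ Finset.univ.filter (fun g : (j : Fin n) → Fin (m j) => g j = x),
      traceMulLin (G g)) - traceMulLin (D j x) with hL
  have hker : S₀ ⊆ ↑(LinearMap.ker L) := by
    intro σ hσ
    rw [SetLike.mem_coe, LinearMap.mem_ker, hL, LinearMap.sub_apply, LinearMap.sum_apply,
      sub_eq_zero]
    exact hmarg σ hσ j x
  have hspan : (affineSpan ℝ S₀ : Set (Matrix (Fin d) (Fin d) ℂ)) ⊆ ↑(Submodule.span ℝ S₀) :=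
    affineSpan_subset_span
  have hρker : L ρ = 0 := by
    have h1 : ρ ∈ Submodule.span ℝ S₀ := hspan (hsub hρ)
    have h2 : Submodule.span ℝ S₀ ≤ LinearMap.ker L := Submodule.span_le.mpr hker
    exact LinearMap.mem_ker.mp (h2 h1)
  rw [hL, LinearMap.sub_apply, LinearMap.sum_apply, sub_eq_zero] at hρker
  exact hρker

/-! ### Orthogonal pure states -/

def Eb (d : ℕ) (i : Fin d) : Matrix (Fin d) (Fin d) ℂ := Matrix.diagonal (Pi.single i 1)

lemma Eb_psd (d : ℕ) (i : Fin d) : (Eb d i).PosSemidef := by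
  apply Matrix.PosSemidef.diagonal
  intro j
  simp only [Pi.single_apply]
  split <;> simp

lemma Eb_trace (d : ℕ) (i : Fin d) : (Eb d i).trace = 1 := by
  simp [Eb, Matrix.trace_diagonal, Pi.single_apply]

lemma Eb_sum (d : ℕ) : ∑ i, Eb d i = 1 := by
  ext a b
  by_cases h : a = b
  · subst h
    simp [Eb, Matrix.sum_apply, Matrix.diagonal_apply, Pi.single_apply, Matrix.one_apply]
  · simp [Eb, Matrix.sum_apply, Matrix.diagonal_apply, h, Matrix.one_apply]

lemma Eb_mul_trace (d : ℕ) (a b : Fin d) :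
    (Eb d a * Eb d b).trace = if a = b then 1 else 0 := by
  rw [Eb, Eb, Matrix.diagonal_mul_diagonal, Matrix.trace_diagonal]
  by_cases h : a = b
  · subst h; simp [Pi.single_apply]
  · simp only [Pi.single_apply]
    rw [Finset.sum_eq_zero, if_neg h]
    intro x _
    by_cases hx : x = a <;> by_cases hy : x = b <;> simp_all

lemma Eb_indep (d : ℕ) (hd : 0 < d) :
    d - 1 ≤ Module.finrank ℝ (vectorSpan ℝ (Set.range (Eb d))) := by
  classical
  set i0 : Fin d := ⟨0, hd⟩ with hi0
  have hmem : ∀ i : {i : Fin d // i ≠ i0},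
      Eb d i.1 - Eb d i0 ∈ vectorSpan ℝ (Set.range (Eb d)) := by
    intro i
    rw [← vsub_eq_sub]
    exact vsub_mem_vectorSpan ℝ (Set.mem_range_self _) (Set.mem_range_self _)
  set f : {i : Fin d // i ≠ i0} → ↥(vectorSpan ℝ (Set.range (Eb d))) :=
    fun i => ⟨Eb d i.1 - Eb d i0, hmem i⟩ with hf
  have hindep_amb : LinearIndependent ℝ
      (fun i : {i : Fin d // i ≠ i0} => Eb d i.1 - Eb d i0) := by
    rw [Fintype.linearIndependent_iff]
    intro g hsum i
    have := congrFun (congrFun hsum i.1) i.1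
    simp only [Finset.sum_apply, Matrix.sum_apply, Pi.smul_apply, Matrix.smul_apply,
      Matrix.sub_apply, Eb, Matrix.diagonal_apply_eq, Pi.single_apply, Matrix.zero_apply] at this
    rw [Finset.sum_eq_single i] at this
    · simpa [i.2, smul_eq_mul] using this
    · intro b _ hb
      have hbne : (i : Fin d) ≠ (b : Fin d) := fun hh => hb (Subtype.ext hh.symm)
      simp [hbne, i.2, Ne.symm hbne]
    · simp
  have hindep : LinearIndependent ℝ f := by
    apply LinearIndependent.of_comp (vectorSpan ℝ (Set.range (Eb d))).subtype
    exact hindep_amb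
  have hcard := hindep.fintype_card_le_finrank
  have : Fintype.card {i : Fin d // i ≠ i0} = d - 1 := by
    simp [Fintype.card_subtype_compl]
  omega

/-! ### Main theorem -/

/-- For any incompatible collection of observables on a `d`-dimensional space:
`2 ≤ χ_incomp ≤ d²`, `d ≤ χ_comp ≤ d² − 1`, and `χ_incomp ≤ χ_comp + 1`. -/
theorem chi_dimension_bounds {d n : ℕ} {m : Fin n → ℕ} (hd : 0 < d)
    (D : (j : Fin n) → Fin (m j) → Matrix (Fin d) (Fin d) ℂ)
    (hD : ∀ j, IsPOVM (D j))
    (hinc : ¬ SCompat D {ρ | IsState ρ}) :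
    2 ≤ chiIncomp D ∧ chiIncomp D ≤ d ^ 2 ∧
    d ≤ chiComp D ∧ chiComp D ≤ d ^ 2 - 1 ∧
    chiIncomp D ≤ chiComp D + 1 := by
  classical
  set SS : Set (Matrix (Fin d) (Fin d) ℂ) := {ρ | IsState ρ} with hSSdef
  have hSSstates : ∀ ρ ∈ SS, IsState ρ := fun ρ h => h
  -- rule out d = 1
  by_cases hd2 : 2 ≤ d
  swap
  · exfalso
    have hd1 : d = 1 := by omega
    apply hinc
    apply scompat_of_subsingleton hd D hD hSSstates
    intro a ha b hb
    subst hd1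
    have htra : a.trace = 1 := ha.2
    have htrb : b.trace = 1 := hb.2
    rw [Matrix.trace] at htra htrb
    ext i j
    have hi : i = 0 := Subsingleton.elim i 0
    have hj : j = 0 := Subsingleton.elim j 0
    subst hi; subst hj
    have ha' : a 0 0 = 1 := by simpa [Matrix.diag] using htra
    have hb' : b 0 0 = 1 := by simpa [Matrix.diag] using htrb
    rw [ha', hb']
  -- basic dimension bound
  have hd21 : 4 ≤ d ^ 2 := by
    calc 4 = 2 ^ 2 := by norm_num
    _ ≤ d ^ 2 := Nat.pow_le_pow_left hd2 2
  have hA : ∀ (S₀ : Set (Matrix (Fin d) (Fin d) ℂ)), (∀ ρ ∈ S₀, IsState ρ) →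
      Module.finrank ℝ (vectorSpan ℝ S₀) ≤ d ^ 2 - 1 := by
    intro S₀ hS
    have h1 : Module.finrank ℝ (vectorSpan ℝ S₀) ≤ Module.finrank ℝ (hermT d) :=
      Submodule.finrank_mono (vectorSpan_states_le hS)
    have h2 := finrank_hermT d hd
    have h3 : d * d = d ^ 2 := by ring
    omega
  set CSet : Set ℕ := {k : ℕ | ∃ S₀ : Set (Matrix (Fin d) (Fin d) ℂ),
    (∀ ρ ∈ S₀, IsState ρ) ∧ SCompat D S₀ ∧
    k = Module.finrank ℝ (vectorSpan ℝ S₀) + 1} with hCSet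
  set ISet : Set ℕ := {k : ℕ | ∃ S₀ : Set (Matrix (Fin d) (Fin d) ℂ),
    (∀ ρ ∈ S₀, IsState ρ) ∧ ¬ SCompat D S₀ ∧
    k = Module.finrank ℝ (vectorSpan ℝ S₀) + 1} with hISet
  have hchiC : chiComp D = sSup CSet := rfl
  have hchiI : chiIncomp D = sInf ISet := rfl
  -- every element of CSet is at most d² - 1
  have hCbound : ∀ k ∈ CSet, k ≤ d ^ 2 - 1 := by
    rintro k ⟨S₀, hS, hcomp, rfl⟩
    by_contra hk
    push_neg at hk
    have hge : d ^ 2 - 1 ≤ Module.finrank ℝ (vectorSpan ℝ S₀) := by omega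
    have hne : S₀.Nonempty := by
      rcases S₀.eq_empty_or_nonempty with hE | h
      · exfalso
        rw [hE, vectorSpan_empty, finrank_bot] at hge
        omega
      · exact h
    have hSsubSS : S₀ ⊆ SS := fun ρ hρ => hS ρ hρ
    have hvs_eq : vectorSpan ℝ S₀ = vectorSpan ℝ SS :=
      Submodule.eq_of_le_of_finrank_le (vectorSpan_mono ℝ hSsubSS)
        (le_trans (hA SS hSSstates) hge)
    have haff : affineSpan ℝ S₀ = affineSpan ℝ SS := by
      apply AffineSubspace.ext_of_direction_eq
      · rw [direction_affineSpan, direction_affineSpan, hvs_eq]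
      · obtain ⟨p, hp⟩ := hne
        exact ⟨p, subset_affineSpan ℝ _ hp, subset_affineSpan ℝ _ (hSsubSS hp)⟩
    exact hinc (scompat_affine D hcomp (by rw [haff]; exact subset_affineSpan ℝ _))
  -- an element of CSet of size at least d
  have hEbStates : ∀ ρ ∈ Set.range (Eb d), IsState ρ := by
    rintro ρ ⟨i, rfl⟩
    exact ⟨Eb_psd d i, Eb_trace d i⟩
  have hEbCompat : SCompat D (Set.range (Eb d)) :=
    compat_general D hD (Eb d) (Eb d) (Eb_psd d) (Eb_sum d) (fun i => ⟨Eb_psd d i, Eb_trace d i⟩)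
      (Eb_mul_trace d) le_rfl
  have hmemC : Module.finrank ℝ (vectorSpan ℝ (Set.range (Eb d))) + 1 ∈ CSet :=
    ⟨Set.range (Eb d), hEbStates, hEbCompat, rfl⟩
  have hCne : CSet.Nonempty := ⟨_, hmemC⟩
  have hCbdd : BddAbove CSet := ⟨d ^ 2 - 1, fun k hk => hCbound k hk⟩
  -- χ_comp bounds
  have hchiCle : chiComp D ≤ d ^ 2 - 1 := by
    rw [hchiC]; exact csSup_le hCne hCbound
  have hdleC : d ≤ chiComp D := by
    rw [hchiC]
    have h1 := Eb_indep d hd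
    have h2 : Module.finrank ℝ (vectorSpan ℝ (Set.range (Eb d))) + 1 ≤ sSup CSet :=
      le_csSup hCbdd hmemC
    omega
  -- χ_incomp ≥ 2
  have hmemI : Module.finrank ℝ (vectorSpan ℝ SS) + 1 ∈ ISet :=
    ⟨SS, hSSstates, hinc, rfl⟩
  have hIne : ISet.Nonempty := ⟨_, hmemI⟩
  have hchiI2 : 2 ≤ chiIncomp D := by
    rw [hchiI]
    obtain ⟨S₀, hS, hncomp, heq⟩ := Nat.sInf_mem hIne
    by_contra hlt
    push_neg at hlt
    have hfr0 : Module.finrank ℝ (vectorSpan ℝ S₀) = 0 := by omega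
    have hbot : vectorSpan ℝ S₀ = ⊥ := Submodule.finrank_eq_zero.mp hfr0
    have hsub : S₀.Subsingleton := by
      intro a ha b hb
      have : a - b ∈ vectorSpan ℝ S₀ := by
        rw [← vsub_eq_sub]
        exact vsub_mem_vectorSpan ℝ ha hb
      rw [hbot, Submodule.mem_bot] at this
      exact sub_eq_zero.mp this
    exact hncomp (scompat_of_subsingleton hd D hD hS hsub)
  -- χ_incomp ≤ χ_comp + 1
  have hchiIle : chiIncomp D ≤ chiComp D + 1 := by
    obtain ⟨T₀, hT, hTcomp, heqT⟩ := Nat.sSup_mem hCne hCbdd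
    rw [← hchiC] at heqT
    have hfrT : d - 1 ≤ Module.finrank ℝ (vectorSpan ℝ T₀) := by omega
    have hTne : T₀.Nonempty := by
      rcases T₀.eq_empty_or_nonempty with hE | h
      · exfalso
        rw [hE, vectorSpan_empty, finrank_bot] at hfrT
        omega
      · exact h
    obtain ⟨s₀, hs₀⟩ := hTne
    have hex : ∃ ρ, IsState ρ ∧ ρ ∉ (affineSpan ℝ T₀ : Set (Matrix (Fin d) (Fin d) ℂ)) := by
      by_contra hall
      push_neg at hall
      exact hinc (scompat_affine D hTcomp (fun ρ hρ => hall ρ hρ))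
    obtain ⟨ρ, hρstate, hρnot⟩ := hex
    set T₁ : Set (Matrix (Fin d) (Fin d) ℂ) := insert ρ T₀ with hT₁
    have hT₁states : ∀ σ ∈ T₁, IsState σ := by
      rintro σ hσ
      rcases Set.mem_insert_iff.mp hσ with h | h
      · subst h; exact hρstate
      · exact hT σ h
    have hlt : Module.finrank ℝ (vectorSpan ℝ T₀) < Module.finrank ℝ (vectorSpan ℝ T₁) := by
      apply Submodule.finrank_lt_finrank_of_lt
      apply lt_of_le_of_ne (vectorSpan_mono ℝ (Set.subset_insert ρ T₀))
      intro heq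
      apply hρnot
      have hmem1 : ρ - s₀ ∈ vectorSpan ℝ T₁ := by
        rw [← vsub_eq_sub]
        exact vsub_mem_vectorSpan ℝ (Set.mem_insert _ _) (Set.mem_insert_of_mem _ hs₀)
      rw [← heq] at hmem1
      have : (ρ - s₀) +ᵥ s₀ ∈ affineSpan ℝ T₀ := by
        apply AffineSubspace.vadd_mem_of_mem_direction
        · rw [direction_affineSpan]; exact hmem1
        · exact subset_affineSpan ℝ _ hs₀
      simpa [vadd_eq_add, sub_add_cancel] using this
    have hle1 : Module.finrank ℝ (vectorSpan ℝ T₁)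
        ≤ Module.finrank ℝ (vectorSpan ℝ T₀) + 1 :=
      finrank_vectorSpan_insert_le_set ℝ T₀ ρ
    have hT₁incomp : ¬ SCompat D T₁ := by
      intro hc
      have hmem : Module.finrank ℝ (vectorSpan ℝ T₁) + 1 ∈ CSet :=
        ⟨T₁, hT₁states, hc, rfl⟩
      have := le_csSup hCbdd hmem
      rw [← hchiC] at this
      omega
    have hmemI1 : Module.finrank ℝ (vectorSpan ℝ T₁) + 1 ∈ ISet :=
      ⟨T₁, hT₁states, hT₁incomp, rfl⟩
    have := Nat.sInf_le hmemI1
    rw [← hchiI] at this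
    omega
  refine ⟨hchiI2, ?_, hdleC, hchiCle, hchiIle⟩
  omega
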